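/- If T is a tree with at least three vertices, then T has a color-blind distinguishing 2-edge-coloring; that is, dal(T) ≤ 2. -/

import Mathlib

open Finset

/-- The color-blind partition of `v`: the multiset of (nonzero) counts of incident
edges of each color, i.e. the partition of `deg v` with trailing zeroes removed. -/
def cbp {V : Type*} [Fintype V] [DecidableEq V] (G : SimpleGraph V) [DecidableRel G.Adj]
    {k : ℕ} (c : Sym2 V → Fin k) (v : V) : Multiset ℕ :=
  (((Finset.univ : Finset (Fin k)).val.map fun i =>
    ((G.neighborFinset v).filter fun w => c s(v, w) = i).card).filter fun m => m ≠ 0)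

/-- `c` is a color-blind distinguishing edge-coloring of `G`. -/
def IsCBD {V : Type*} [Fintype V] [DecidableEq V] (G : SimpleGraph V) [DecidableRel G.Adj]
    {k : ℕ} (c : Sym2 V → Fin k) : Prop :=
  ∀ u v : V, G.Adj u v → cbp G c u ≠ cbp G c v

namespace TreeCBDAux

open SimpleGraph Walk

set_option linter.unusedSectionVars false

variable {V : Type*} [Fintype V] [DecidableEq V] {G : SimpleGraph V} [DecidableRel G.Adj]

lemma dist_ne_of_adj (hT : G.IsTree) (r : V) {u v : V} (h : G.Adj u v) :
    G.dist r u ≠ G.dist r v := by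
  intro heq
  have hconn := hT.isConnected
  obtain ⟨q, hq⟩ := hconn.exists_walk_length_eq_dist r u
  have hqp : q.IsPath := q.isPath_of_length_eq_dist hq
  have hv : v ∉ q.support := by
    intro hv
    have h1 : G.dist r v ≤ (q.takeUntil v hv).length := dist_le _
    have h2 : (q.takeUntil v hv).length + (q.dropUntil v hv).length = q.length := by
      rw [← length_append, take_spec]
    have h3 : G.dist v u ≤ (q.dropUntil v hv).length := dist_le _
    have h4 : G.dist v u = 1 := dist_eq_one_iff_adj.mpr h.symm
    omega
  have hP : (q.concat h).IsPath := by
    rw [isPath_def, support_concat]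
    exact List.Nodup.append (isPath_def _ |>.mp hqp) (List.nodup_singleton v)
      (by simpa using hv)
  obtain ⟨p, hp⟩ := hconn.exists_walk_length_eq_dist r v
  have hpp : p.IsPath := p.isPath_of_length_eq_dist hp
  have := (hT.existsUnique_path r v).unique hP hpp
  have hl : (q.concat h).length = p.length := by rw [this]
  rw [length_concat, hq, hp, heq] at hl
  omega

lemma step_of_adj (hT : G.IsTree) (r : V) {u v : V} (h : G.Adj u v) :
    G.dist r v = G.dist r u + 1 ∨ G.dist r u = G.dist r v + 1 := by
  have hconn := hT.isConnected
  have h1 : G.dist u v = 1 := dist_eq_one_iff_adj.mpr h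
  have h2 : G.dist v u = 1 := dist_eq_one_iff_adj.mpr h.symm
  have t1 := hconn.dist_triangle (u := r) (v := u) (w := v)
  have t2 := hconn.dist_triangle (u := r) (v := v) (w := u)
  have hne := dist_ne_of_adj hT r h
  omega

lemma parent_exists (hT : G.IsTree) (r : V) {u : V} (hu : 0 < G.dist r u) :
    ∃ w, G.Adj u w ∧ G.dist r w + 1 = G.dist r u := by
  have hconn := hT.isConnected
  obtain ⟨p, hp⟩ := hconn.exists_walk_length_eq_dist r u
  have hur : u ≠ r := by
    rintro rfl; rw [dist_self] at hu; omega
  obtain ⟨w, hadj, q, hq⟩ := p.reverse.exists_eq_cons_of_ne hur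
  refine ⟨w, hadj, ?_⟩
  have hlen : q.length + 1 = G.dist r u := by
    have := congrArg Walk.length hq
    rw [length_reverse, length_cons] at this
    omega
  have hle : G.dist r w ≤ q.length := by
    have := dist_le q.reverse
    rw [length_reverse] at this
    have hcomm : G.dist r w = G.dist w r := dist_comm
    omega
  rcases step_of_adj hT r hadj.symm with h' | h' <;> omega

lemma parent_unique (hT : G.IsTree) (r : V) {u w1 w2 : V}
    (h1 : G.Adj u w1) (h2 : G.Adj u w2)
    (hd1 : G.dist r w1 + 1 = G.dist r u) (hd2 : G.dist r w2 + 1 = G.dist r u) :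
    w1 = w2 := by
  have hconn := hT.isConnected
  obtain ⟨q1, hq1⟩ := hconn.exists_walk_length_eq_dist r w1
  obtain ⟨q2, hq2⟩ := hconn.exists_walk_length_eq_dist r w2
  have key : ∀ {w : V} (h : G.Adj u w) (q : G.Walk r w), q.length = G.dist r w →
      G.dist r w + 1 = G.dist r u → (q.concat h.symm).IsPath := by
    intro w h q hq hd
    have hqp : q.IsPath := q.isPath_of_length_eq_dist hq
    have hu : u ∉ q.support := by
      intro hmem
      have hle : G.dist r u ≤ (q.takeUntil u hmem).length := dist_le _
      have := q.length_takeUntil_le hmem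
      omega
    rw [isPath_def, support_concat]
    exact List.Nodup.append (isPath_def _ |>.mp hqp) (List.nodup_singleton u)
      (by simpa using hu)
  have hP1 := key h1 q1 hq1 hd1
  have hP2 := key h2 q2 hq2 hd2
  have heq := (hT.existsUnique_path r u).unique hP1 hP2
  obtain ⟨hv, -⟩ := Walk.concat_inj heq
  exact hv

lemma no_adj_leaves (hT : G.IsTree) (h3 : 3 ≤ Fintype.card V) {u v : V}
    (h : G.Adj u v) (hu : G.degree u = 1) (hv : G.degree v = 1) : False := by
  have hconn := hT.isConnected
  -- find a third vertex
  have : ({u, v}ᶜ : Finset V).Nonempty := by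
    rw [← Finset.card_pos, Finset.card_compl]
    have := Finset.card_insert_le u ({v} : Finset V)
    simp only [Finset.card_singleton] at this
    omega
  obtain ⟨w, hw⟩ := this
  simp only [Finset.mem_compl, Finset.mem_insert, Finset.mem_singleton, not_or] at hw
  have hNu : G.neighborFinset u = {v} := by
    refine (Finset.eq_of_subset_of_card_le ?_ ?_).symm
    · intro x hx
      simp only [Finset.mem_singleton] at hx
      subst hx
      rwa [SimpleGraph.mem_neighborFinset]
    · rw [SimpleGraph.card_neighborFinset_eq_degree, hu, Finset.card_singleton]
  have hNv : G.neighborFinset v = {u} := by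
    refine (Finset.eq_of_subset_of_card_le ?_ ?_).symm
    · intro x hx
      simp only [Finset.mem_singleton] at hx
      subst hx
      rw [SimpleGraph.mem_neighborFinset]
      exact h.symm
    · rw [SimpleGraph.card_neighborFinset_eq_degree, hv, Finset.card_singleton]
  -- take a path from u to w
  obtain ⟨p0⟩ := hconn.preconnected u w
  have hp : p0.bypass.IsPath := Walk.bypass_isPath p0
  set p := p0.bypass with hpdef
  obtain ⟨x, hx, q, hq⟩ := p.exists_eq_cons_of_ne (Ne.symm hw.1)
  have hxv : x = v := by
    have : x ∈ G.neighborFinset u := by rwa [SimpleGraph.mem_neighborFinset]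
    rwa [hNu, Finset.mem_singleton] at this
  obtain ⟨y, hy, q', hq'⟩ := q.exists_eq_cons_of_ne (by rw [hxv]; exact Ne.symm hw.2)
  have hyu : y = u := by
    have hmem : y ∈ G.neighborFinset v := by
      rw [SimpleGraph.mem_neighborFinset]; exact hxv ▸ hy
    rwa [hNv, Finset.mem_singleton] at hmem
  subst hyu
  rw [hq, hq'] at hp
  have := hp.2
  simp only [Walk.support_cons, List.nodup_cons] at this
  exact this.1 (by simp [Walk.start_mem_support])

noncomputable def tcol (G : SimpleGraph V) (r : V) : Sym2 V → Fin 2 :=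
  Sym2.lift ⟨fun u v => ⟨((min (G.dist r u) (G.dist r v) + 1) / 2) % 2, by omega⟩,
    fun u v => by simp [min_comm]⟩

lemma tcol_val (G : SimpleGraph V) (r u v : V) :
    (tcol G r s(u, v)).val = ((min (G.dist r u) (G.dist r v) + 1) / 2) % 2 := rfl

variable {G : SimpleGraph V} [DecidableRel G.Adj]

lemma cbp_eval (c : Sym2 V → Fin 2) (v : V) :
    cbp G c v = Multiset.filter (fun m => m ≠ 0)
      {((G.neighborFinset v).filter fun w => c s(v, w) = 0).card,
       ((G.neighborFinset v).filter fun w => c s(v, w) = 1).card} := rfl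

lemma ms_filter_a0 (a : ℕ) (ha : a ≠ 0) :
    Multiset.filter (fun m => m ≠ 0) ({a, 0} : Multiset ℕ) = {a} := by
  simp [Multiset.filter_cons, Multiset.filter_singleton, ha]

lemma ms_filter_0a (a : ℕ) (ha : a ≠ 0) :
    Multiset.filter (fun m => m ≠ 0) ({0, a} : Multiset ℕ) = {a} := by
  simp [Multiset.filter_cons, Multiset.filter_singleton, ha]

/-- At a vertex of even distance from the root, all incident edges get the same color. -/
lemma cbp_even (hT : G.IsTree) (r : V) {u : V} (hne : (G.neighborFinset u).Nonempty)
    (heven : Even (G.dist r u)) : cbp G (tcol G r) u = {G.degree u} := by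
  obtain ⟨k, hk⟩ := heven
  have key : ∀ w ∈ G.neighborFinset u, (tcol G r s(u, w)).val = ((G.dist r u + 1) / 2) % 2 := by
    intro w hw
    rw [mem_neighborFinset] at hw
    rcases step_of_adj hT r hw with h' | h' <;> (rw [tcol_val]; omega)
  have hdeg : G.degree u ≠ 0 := by
    rw [← card_neighborFinset_eq_degree]
    exact (Finset.card_pos.mpr hne).ne'
  rw [cbp_eval]
  rcases Nat.mod_two_eq_zero_or_one ((G.dist r u + 1) / 2) with h0 | h0
  · have hfull : (G.neighborFinset u).filter (fun w => tcol G r s(u, w) = 0) =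
        G.neighborFinset u := by
      apply Finset.filter_true_of_mem
      intro w hw
      exact Fin.ext (by rw [key w hw, h0]; rfl)
    have hempty : (G.neighborFinset u).filter (fun w => tcol G r s(u, w) = 1) = ∅ := by
      apply Finset.filter_false_of_mem
      intro w hw heq
      have := key w hw
      rw [heq] at this
      simp at this
      omega
    rw [hfull, hempty, Finset.card_empty, card_neighborFinset_eq_degree]
    exact ms_filter_a0 _ hdeg
  · have hfull : (G.neighborFinset u).filter (fun w => tcol G r s(u, w) = 1) =
        G.neighborFinset u := by
      apply Finset.filter_true_of_mem
      intro w hw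
      exact Fin.ext (by rw [key w hw, h0]; rfl)
    have hempty : (G.neighborFinset u).filter (fun w => tcol G r s(u, w) = 0) = ∅ := by
      apply Finset.filter_false_of_mem
      intro w hw heq
      have := key w hw
      rw [heq] at this
      simp at this
      omega
    rw [hfull, hempty, Finset.card_empty, card_neighborFinset_eq_degree]
    exact ms_filter_0a _ hdeg

lemma fin2_aux : ∀ a b c : Fin 2, b ≠ c → (a = c ↔ ¬a = b) := by decide

lemma cbp_odd (hT : G.IsTree) (r : V) {v : V} (hodd : Odd (G.dist r v)) :
    cbp G (tcol G r) v = Multiset.filter (fun m => m ≠ 0) {1, G.degree v - 1} := by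
  obtain ⟨k, hk⟩ := hodd
  have hpos : 0 < G.dist r v := by omega
  obtain ⟨w0, hw0adj, hw0d⟩ := parent_exists hT r hpos
  set i1 : Fin 2 := ⟨(G.dist r v / 2) % 2, by omega⟩ with hi1
  have hv1 : i1.val = (G.dist r v / 2) % 2 := rfl
  have hfilter1 : (G.neighborFinset v).filter (fun w => tcol G r s(v, w) = i1) = {w0} := by
    ext x
    simp only [Finset.mem_filter, Finset.mem_singleton, mem_neighborFinset]
    constructor
    · rintro ⟨hadj, hcol⟩
      have hval := congrArg Fin.val hcol
      rw [tcol_val] at hval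
      rw [hv1] at hval
      rcases step_of_adj hT r hadj with h' | h'
      · omega
      · exact parent_unique hT r hadj hw0adj h'.symm hw0d
    · rintro rfl
      refine ⟨hw0adj, Fin.ext ?_⟩
      rw [tcol_val, hv1]
      omega
  set i2 : Fin 2 := ⟨(G.dist r v / 2 + 1) % 2, by omega⟩ with hi2
  have hv2 : i2.val = (G.dist r v / 2 + 1) % 2 := rfl
  have hne12 : i1 ≠ i2 := by
    simp only [hi1, hi2, Ne, Fin.mk.injEq]
    omega
  have hfilter2 : ((G.neighborFinset v).filter (fun w => tcol G r s(v, w) = i2)).card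
      = G.degree v - 1 := by
    have hsum := Finset.card_filter_add_card_filter_not
      (s := G.neighborFinset v) (p := fun w => tcol G r s(v, w) = i1)
    have hcongr : (G.neighborFinset v).filter (fun w => tcol G r s(v, w) = i2)
        = (G.neighborFinset v).filter (fun w => ¬tcol G r s(v, w) = i1) := by
      apply Finset.filter_congr
      intro w _
      exact fin2_aux _ _ _ hne12
    rw [hcongr, ← card_neighborFinset_eq_degree]
    rw [hfilter1, Finset.card_singleton] at hsum
    omega
  have hdeg1 : 1 ≤ G.degree v := by
    rw [← card_neighborFinset_eq_degree]
    exact Finset.card_pos.mpr ⟨w0, (mem_neighborFinset G v w0).mpr hw0adj⟩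
  rw [cbp_eval]
  rcases Nat.mod_two_eq_zero_or_one (G.dist r v / 2) with h0 | h0
  · have e1 : i1 = 0 := Fin.ext (by rw [hv1]; omega)
    have e2 : i2 = 1 := Fin.ext (by rw [hv2]; omega)
    rw [← e1, ← e2, hfilter1, Finset.card_singleton, hfilter2]
  · have e1 : i1 = 1 := Fin.ext (by rw [hv1]; omega)
    have e2 : i2 = 0 := Fin.ext (by rw [hv2]; omega)
    rw [← e1, ← e2, hfilter1, Finset.card_singleton, hfilter2, Multiset.pair_comm]

lemma cbp_side (hT : G.IsTree) (h3 : 3 ≤ Fintype.card V) (r : V) {u v : V} (h : G.Adj u v)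
    (heven : Even (G.dist r u)) : cbp G (tcol G r) u ≠ cbp G (tcol G r) v := by
  have hodd : Odd (G.dist r v) := by
    rw [Nat.odd_iff]
    rw [Nat.even_iff] at heven
    rcases step_of_adj hT r h with h' | h' <;> omega
  rw [cbp_even hT r ⟨v, (mem_neighborFinset G u v).mpr h⟩ heven, cbp_odd hT r hodd]
  have hdegv : 1 ≤ G.degree v := by
    rw [← card_neighborFinset_eq_degree]
    exact Finset.card_pos.mpr ⟨u, (mem_neighborFinset G v u).mpr h.symm⟩
  rcases Nat.lt_or_ge (G.degree v) 2 with hlt | hge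
  · have hdv : G.degree v = 1 := by omega
    rw [hdv]
    have : Multiset.filter (fun m => m ≠ 0) ({1, 1 - 1} : Multiset ℕ) = {1} :=
      ms_filter_a0 1 one_ne_zero
    rw [this]
    intro heq
    have := Multiset.singleton_inj.mp heq
    exact no_adj_leaves hT h3 h this hdv
  · have : Multiset.filter (fun m => m ≠ 0) ({1, G.degree v - 1} : Multiset ℕ)
        = {1, G.degree v - 1} := by
      rw [Multiset.filter_eq_self]
      intro x hx
      rcases Multiset.mem_cons.mp hx with h1 | h1
      · omega
      · rw [Multiset.mem_singleton] at h1
        omega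
    rw [this]
    intro heq
    have := congrArg Multiset.card heq
    simp at this

theorem tree_dal_le_two' (hT : G.IsTree) (h3 : 3 ≤ Fintype.card V) :
    ∃ c : Sym2 V → Fin 2, ∀ u v : V, G.Adj u v → cbp G c u ≠ cbp G c v := by
  have hne : Nonempty V := Fintype.card_pos_iff.mp (by omega)
  obtain ⟨r⟩ := hne
  refine ⟨tcol G r, fun u v h => ?_⟩
  rcases Nat.even_or_odd (G.dist r u) with he | ho
  · exact cbp_side hT h3 r h he
  · have hev : Even (G.dist r v) := by
      rw [Nat.even_iff]
      rw [Nat.odd_iff] at ho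
      rcases step_of_adj hT r h with h' | h' <;> omega
    exact (cbp_side hT h3 r h.symm hev).symm

end TreeCBDAux

theorem tree_dal_le_two {V : Type*} [Fintype V] [DecidableEq V]
    (G : SimpleGraph V) [DecidableRel G.Adj]
    (hT : G.IsTree) (h3 : 3 ≤ Fintype.card V) :
    ∃ c : Sym2 V → Fin 2, IsCBD G c :=
  TreeCBDAux.tree_dal_le_two' hT h3
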